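/- Let K be a field and B a commutative K-algebra that is finite-dimensional as a K-vector space, with dimension n = [B : K]. Suppose either K has characteristic zero, or K has prime characteristic p with p > n. If B is reduced, then the trace form of B over K is nondegenerate. -/

import Mathlib

/-- Let `B` be a finite-dimensional commutative algebra over a field `K` of
characteristic zero, or of prime characteristic `p > [B : K]`. If `B` is reduced,
then the trace form of `B` over `K` is nondegenerate. -/
theorem stmt6 {K B : Type*} [Field K] [CommRing B] [Algebra K B]
    [FiniteDimensional K B]
    (hchar : CharP K 0 ∨ ∃ p : ℕ, p.Prime ∧ CharP K p ∧ Module.finrank K B < p)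
    (hred : IsReduced B) :
    (Algebra.traceForm K B).Nondegenerate := by
  refine (LinearMap.IsRefl.nondegenerate_iff_separatingLeft (show LinearMap.IsRefl (Algebra.traceForm K B) from (Algebra.traceForm_isSymm K).isRefl)).mpr ?_
  intro x hx
  by_contra hx0
  haveI : IsArtinianRing B := isArtinian_of_tower K inferInstance
  haveI : IsSemisimpleRing B := IsArtinianRing.isSemisimpleRing_of_isReduced B
  obtain ⟨e, he, hIe⟩ := IsSemisimpleRing.ideal_eq_span_idempotent (Ideal.span {x})
  -- e = c * x for some c
  have hmem : e ∈ Ideal.span ({x} : Set B) := by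
    rw [hIe]; exact Ideal.mem_span_singleton_self e
  obtain ⟨c, hc⟩ := Ideal.mem_span_singleton'.mp hmem
  -- trace of e is zero
  have htr0 : Algebra.trace K B e = 0 := by
    have := hx c
    rw [Algebra.traceForm_apply] at this
    rw [← hc, mul_comm]; exact this
  -- the range of multiplication by e
  set p : Submodule K B := LinearMap.range ((Algebra.lmul K B e)) with hp
  have hproj : LinearMap.IsProj p ((Algebra.lmul K B e)) := by
    constructor
    · intro y; exact LinearMap.mem_range_self _ y
    · rintro y ⟨z, rfl⟩
      show e * (e * z) = e * z
      rw [← mul_assoc, he.eq]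
  have htr : Algebra.trace K B e = (Module.finrank K p : K) := by
    rw [Algebra.trace_apply]
    exact hproj.trace
  -- x is in p, so p is nontrivial
  have hxp : x ∈ p := by
    have : x ∈ Ideal.span ({e} : Set B) := by
      rw [← hIe]; exact Ideal.mem_span_singleton_self x
    obtain ⟨d, hd⟩ := Ideal.mem_span_singleton'.mp this
    exact ⟨d, by simpa [mul_comm] using hd⟩
  have hpos : 0 < Module.finrank K p := by
    have : p ≠ ⊥ := fun h => hx0 (by simpa [h] using hxp)
    exact Nat.pos_of_ne_zero (fun h0 => this (Submodule.finrank_eq_zero.mp h0))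
  have hle : Module.finrank K p ≤ Module.finrank K B := Submodule.finrank_le p
  have hcast : (Module.finrank K p : K) ≠ 0 := by
    rcases hchar with h0 | ⟨q, hq, hqc, hqn⟩
    · haveI := h0
      haveI : CharZero K := CharP.charP_to_charZero K
      exact Nat.cast_ne_zero.mpr hpos.ne'
    · haveI := hqc
      intro hz
      have hdvd := (CharP.cast_eq_zero_iff K q _).mp hz
      exact absurd (Nat.le_of_dvd hpos hdvd) (not_le.mpr (lt_of_le_of_lt hle hqn))
  rw [htr] at htr0
  exact hcast htr0
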